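/- Let λ_n → ∞ be a sequence of positive reals, T > 0, R_c > 0, 0 ≤ α₀ < 2, and define f_n(x) = λ_n π R_c² exp(−λ_n π R_c² x (1 + ∫₁^{1/x} T/(T + t^{α₀/2}) dt)) for x ∈ (0,1). Then ∫₀¹ f_n(x) dx → 0 as n → ∞. -/

import Mathlib

open Real MeasureTheory Filter intervalIntegral

private lemma aux16 (T Rc β : ℝ) (hT : 0 < T) (hRc : 0 < Rc) (hβ0 : 0 ≤ β) (hβ1 : β < 1)
    (lam : ℕ → ℝ) (hpos : ∀ n, 0 < lam n) (hlim : Tendsto lam atTop atTop) :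
    Tendsto
      (fun n => ∫ x in (0:ℝ)..1,
        lam n * π * Rc ^ 2 *
          Real.exp (-(lam n * π * Rc ^ 2 * x *
            (1 + ∫ t in (1:ℝ)..(1 / x), T / (T + t ^ β)))))
      atTop (nhds 0) := by
  set g : ℝ → ℝ := fun t => T / (T + t ^ β) with hgdef
  set I : ℝ → ℝ := fun x => ∫ t in (1:ℝ)..(1 / x), g t with hIdef
  set A : ℕ → ℝ := fun n => lam n * π * Rc ^ 2 with hAdef
  set f : ℕ → ℝ → ℝ := fun n x => A n * Real.exp (-(A n * x * (1 + I x))) with hfdef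
  show Tendsto (fun n => ∫ x in (0:ℝ)..1, f n x) atTop (nhds 0)
  have hA : ∀ n, 0 < A n := fun n => by
    have := hpos n
    simp only [hAdef]
    positivity
  have hAtop : Tendsto A atTop atTop := by
    have h1 := hlim.atTop_mul_const Real.pi_pos
    exact h1.atTop_mul_const (pow_pos hRc 2)
  have hden : ∀ t : ℝ, 0 ≤ t → 0 < T + t ^ β := fun t ht =>
    add_pos_of_pos_of_nonneg hT (Real.rpow_nonneg ht β)
  have hgcont : ContinuousOn g (Set.Ici 1) := by
    apply ContinuousOn.div continuousOn_const
    · exact continuousOn_const.add (continuousOn_id.rpow_const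
        (fun x hx => Or.inl (by simp only [id_eq]; intro h; rw [h] at hx; simp at hx; linarith)))
    · intro x hx
      exact (hden x (le_trans zero_le_one hx)).ne'
  have hgint : ∀ y : ℝ, 1 ≤ y → IntervalIntegrable g volume 1 y := fun y hy => by
    apply (hgcont.mono ?_).intervalIntegrable
    rw [Set.uIcc_of_le hy]
    exact fun t ht => ht.1
  have hgnonneg : ∀ t : ℝ, 0 ≤ t → 0 ≤ g t := fun t ht =>
    div_nonneg hT.le (hden t ht).le
  have hI_nonneg : ∀ x : ℝ, 0 < x → x ≤ 1 → 0 ≤ I x := by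
    intro x hx hx1
    have h1x : (1:ℝ) ≤ 1 / x := by
      rw [le_div_iff₀ hx]; linarith
    exact intervalIntegral.integral_nonneg h1x
      (fun u hu => hgnonneg u (le_trans zero_le_one hu.1))
  set c₀ : ℝ := T / (2 * (T + 1)) with hc₀def
  have hc₀ : 0 < c₀ := by positivity
  have hT1 : (0:ℝ) < T + 1 := by linarith
  -- lower bound on 1 + I x for small x
  have hIlow : ∀ x : ℝ, 0 < x → x ≤ 1 / 2 → c₀ * x ^ (β - 1) ≤ 1 + I x := by
    intro x hx hx2
    have hy2 : (2:ℝ) ≤ 1 / x := by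
      rw [le_div_iff₀ hx]; linarith
    have hy1 : (1:ℝ) ≤ 1 / x := by linarith
    have hypos : (0:ℝ) < 1 / x := by positivity
    have hconst : ∀ t ∈ Set.Icc (1:ℝ) (1 / x), g (1 / x) ≤ g t := by
      intro t ht
      have htpos : (0:ℝ) < t := lt_of_lt_of_le one_pos ht.1
      have hrp : t ^ β ≤ (1 / x) ^ β := Real.rpow_le_rpow htpos.le ht.2 hβ0
      have h1 : 0 < T + t ^ β := hden t htpos.le
      have h2 : 0 < T + (1 / x) ^ β := hden _ hypos.le
      simp only [hgdef]
      rw [div_le_div_iff₀ h2 h1]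
      nlinarith
    have hstep1 : (1 / x - 1) * g (1 / x) ≤ I x := by
      have h0 := intervalIntegral.integral_mono_on hy1
        (_root_.intervalIntegrable_const (c := g (1 / x))) (hgint _ hy1) hconst
      rwa [intervalIntegral.integral_const, smul_eq_mul] at h0
    have hyβ : (1:ℝ) ≤ (1 / x) ^ β := by
      calc (1:ℝ) = (1 / x) ^ (0:ℝ) := (Real.rpow_zero _).symm
        _ ≤ (1 / x) ^ β := Real.rpow_le_rpow_of_exponent_le hy1 hβ0
    have hyβpos : (0:ℝ) < (1 / x) ^ β := lt_of_lt_of_le one_pos hyβ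
    have hstep2 : c₀ * x ^ (β - 1) ≤ (1 / x - 1) * g (1 / x) := by
      have hgy : T / ((T + 1) * (1 / x) ^ β) ≤ g (1 / x) := by
        simp only [hgdef]
        rw [div_le_div_iff₀ (by positivity) (hden _ hypos.le)]
        nlinarith [mul_le_mul_of_nonneg_left hyβ (mul_nonneg hT.le hT.le)]
      have hxexp : x ^ (β - 1) = (1 / x) ^ (1 - β) := by
        rw [one_div, Real.inv_rpow hx.le, ← Real.rpow_neg hx.le]
        congr 1
        ring
      have hysub : (1 / x) ^ (1 - β) = (1 / x) / (1 / x) ^ β := by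
        rw [Real.rpow_sub hypos, Real.rpow_one]
      calc c₀ * x ^ (β - 1) = (1 / x / 2) * (T / ((T + 1) * (1 / x) ^ β)) := by
            rw [hc₀def, hxexp, hysub]
            field_simp
            try ring
            try tauto
        _ ≤ (1 / x - 1) * (T / ((T + 1) * (1 / x) ^ β)) := by
            have h9 : (0:ℝ) ≤ T / ((T + 1) * (1 / x) ^ β) := by positivity
            nlinarith
        _ ≤ (1 / x - 1) * g (1 / x) := by
            have h8 : (0:ℝ) ≤ 1 / x - 1 := by linarith
            nlinarith [hgy]
    have hIpos := hI_nonneg x hx (by linarith)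
    linarith [le_trans hstep2 hstep1]
  set K : ℝ := Real.exp (-1) / c₀ with hKdef
  have hK : 0 < K := by positivity
  -- pointwise bound for f on (0, 1/2]
  have hfb : ∀ n (x : ℝ), 0 < x → x ≤ 1 / 2 → f n x ≤ K * x ^ (-β) := by
    intro n x hx hx2
    have hI0 := hI_nonneg x hx (by linarith)
    have h1I : (0:ℝ) < 1 + I x := by linarith
    have hAn := hA n
    set u : ℝ := A n * x * (1 + I x) with hudef
    have hu : 0 < u := by
      rw [hudef]; positivity
    have hue : u * Real.exp (-u) ≤ Real.exp (-1) := by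
      have h1 : u ≤ Real.exp (u - 1) := by
        have := Real.add_one_le_exp (u - 1)
        linarith
      calc u * Real.exp (-u) ≤ Real.exp (u - 1) * Real.exp (-u) :=
            mul_le_mul_of_nonneg_right h1 (Real.exp_nonneg _)
        _ = Real.exp (-1) := by rw [← Real.exp_add]; ring_nf
    have hfeq : f n x = u * Real.exp (-u) / (x * (1 + I x)) := by
      simp only [hfdef, hudef]
      field_simp
    have hxb : c₀ * x ^ β ≤ x * (1 + I x) := by
      have h := hIlow x hx hx2
      have hpow : x * x ^ (β - 1) = x ^ β := by
        calc x * x ^ (β - 1) = x ^ (1:ℝ) * x ^ (β - 1) := by rw [Real.rpow_one]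
          _ = x ^ (1 + (β - 1)) := (Real.rpow_add hx 1 (β - 1)).symm
          _ = x ^ β := by norm_num
      calc c₀ * x ^ β = x * (c₀ * x ^ (β - 1)) := by
            rw [mul_left_comm, hpow]
        _ ≤ x * (1 + I x) := mul_le_mul_of_nonneg_left h hx.le
    have hcxb : (0:ℝ) < c₀ * x ^ β := by positivity
    calc f n x = u * Real.exp (-u) / (x * (1 + I x)) := hfeq
      _ ≤ Real.exp (-1) / (x * (1 + I x)) :=
          (div_le_div_iff_of_pos_right (mul_pos hx h1I)).2 hue
      _ ≤ Real.exp (-1) / (c₀ * x ^ β) :=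
          (div_le_div_iff_of_pos_left (Real.exp_pos _) (mul_pos hx h1I) hcxb).2 hxb
      _ = K * x ^ (-β) := by
          rw [hKdef, Real.rpow_neg hx.le]
          field_simp
  -- continuity of I on Ioo 0 1
  have hIcont : ContinuousOn I (Set.Ioo 0 1) := by
    intro x hx
    apply ContinuousAt.continuousWithinAt
    have hx0 : (0:ℝ) < x := hx.1
    have hx1 : x < 1 := hx.2
    have hy1 : (1:ℝ) < 1 / x := by
      rw [lt_div_iff₀ hx0]; linarith
    have hHcont : ContinuousOn (fun y => ∫ t in (1:ℝ)..y, g t)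
        (Set.uIcc 1 (1 / x + 1)) := by
      apply intervalIntegral.continuousOn_primitive_interval
      rw [Set.uIcc_of_le (by linarith : (1:ℝ) ≤ 1 / x + 1)]
      exact (hgcont.mono (fun t ht => ht.1)).integrableOn_compact isCompact_Icc
    have hmem : Set.uIcc (1:ℝ) (1 / x + 1) ∈ nhds (1 / x) := by
      rw [Set.uIcc_of_le (by linarith : (1:ℝ) ≤ 1 / x + 1)]
      exact Icc_mem_nhds hy1 (by linarith)
    have hHca : ContinuousAt (fun y => ∫ t in (1:ℝ)..y, g t) (1 / x) :=
      hHcont.continuousAt hmem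
    have hinv : ContinuousAt (fun z : ℝ => 1 / z) x :=
      continuousAt_const.div continuousAt_id hx0.ne'
    exact hHca.comp hinv
  have hfcont : ∀ n, ContinuousOn (f n) (Set.Ioo 0 1) := by
    intro n
    apply ContinuousOn.mul continuousOn_const
    apply Real.continuous_exp.comp_continuousOn
    apply ContinuousOn.neg
    exact (continuousOn_const.mul continuousOn_id).mul
      (continuousOn_const.add hIcont)
  -- integrability of f n on [0,1]
  have hfint : ∀ n, IntervalIntegrable (f n) volume 0 1 := by
    intro n
    rw [intervalIntegrable_iff_integrableOn_Ioo_of_le zero_le_one]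
    apply Integrable.mono' (integrableOn_const (C := A n) measure_Ioo_lt_top.ne)
      ((hfcont n).aestronglyMeasurable measurableSet_Ioo)
    filter_upwards [ae_restrict_mem measurableSet_Ioo] with x hx
    have hI0 := hI_nonneg x hx.1 hx.2.le
    have hexp : Real.exp (-(A n * x * (1 + I x))) ≤ 1 := by
      rw [Real.exp_le_one_iff]
      have h1 : 0 ≤ A n * x * (1 + I x) :=
        mul_nonneg (mul_nonneg (hA n).le hx.1.le) (by linarith)
      linarith
    have hfnn : 0 ≤ f n x := mul_nonneg (hA n).le (Real.exp_pos _).le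
    rw [Real.norm_eq_abs, abs_of_nonneg hfnn]
    calc f n x = A n * Real.exp (-(A n * x * (1 + I x))) := rfl
      _ ≤ A n * 1 := mul_le_mul_of_nonneg_left hexp (hA n).le
      _ = A n := mul_one _
  -- now the main argument
  rw [Metric.tendsto_atTop]
  intro ε hε
  obtain ⟨δ, hδ0, hδhalf, hδsmall⟩ :
      ∃ δ : ℝ, 0 < δ ∧ δ ≤ 1 / 2 ∧ K / (1 - β) * δ ^ (1 - β) < ε / 2 := by
    set a : ℝ := ε * (1 - β) / (2 * (K + 1)) with hadef
    have h1β : (0:ℝ) < 1 - β := by linarith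
    have ha : 0 < a := by positivity
    set δ : ℝ := min (1 / 2) (a ^ ((1:ℝ) / (1 - β))) with hδdef
    have hδpos : 0 < δ := lt_min (by norm_num) (Real.rpow_pos_of_pos ha _)
    refine ⟨δ, hδpos, min_le_left _ _, ?_⟩
    have hδa : δ ^ (1 - β) ≤ a := by
      have h1 : δ ≤ a ^ ((1:ℝ) / (1 - β)) := min_le_right _ _
      have h2 : δ ^ (1 - β) ≤ (a ^ ((1:ℝ) / (1 - β))) ^ (1 - β) :=
        Real.rpow_le_rpow hδpos.le h1 (by linarith)
      have h3 : (a ^ ((1:ℝ) / (1 - β))) ^ (1 - β) = a := by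
        rw [← Real.rpow_mul ha.le, one_div,
          inv_mul_cancel₀ (by linarith : (1:ℝ) - β ≠ 0), Real.rpow_one]
      rwa [h3] at h2
    calc K / (1 - β) * δ ^ (1 - β) ≤ K / (1 - β) * a := by
          apply mul_le_mul_of_nonneg_left hδa (by positivity)
      _ = ε * (K / (K + 1)) / 2 := by
          rw [hadef]; field_simp
      _ < ε / 2 := by
          have hKK : K / (K + 1) < 1 := by
            rw [div_lt_one (by linarith)]; linarith
          have h7 : ε * (K / (K + 1)) < ε * 1 := mul_lt_mul_of_pos_left hKK hε
          linarith
  have hsub01 : Set.uIcc (0:ℝ) δ ⊆ Set.uIcc (0:ℝ) 1 := by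
    rw [Set.uIcc_of_le hδ0.le, Set.uIcc_of_le zero_le_one]
    exact Set.Icc_subset_Icc le_rfl (by linarith)
  have hsubδ1 : Set.uIcc δ (1:ℝ) ⊆ Set.uIcc (0:ℝ) 1 := by
    rw [Set.uIcc_of_le (by linarith : δ ≤ 1), Set.uIcc_of_le zero_le_one]
    exact Set.Icc_subset_Icc hδ0.le le_rfl
  have hrint : IntervalIntegrable (fun x : ℝ => K * x ^ (-β)) volume 0 δ :=
    (intervalIntegrable_rpow' (by linarith : (-1:ℝ) < -β)).const_mul K
  have key1 : ∀ n, (∫ x in (0:ℝ)..δ, f n x) ≤ K / (1 - β) * δ ^ (1 - β) := by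
    intro n
    have hmono : (∫ x in (0:ℝ)..δ, f n x) ≤ ∫ x in (0:ℝ)..δ, K * x ^ (-β) := by
      apply intervalIntegral.integral_mono_ae_restrict hδ0.le
        ((hfint n).mono_set hsub01) hrint
      have hne : ∀ᵐ x : ℝ, x ≠ 0 := by
        rw [ae_iff]
        simpa using Real.volume_singleton (a := (0:ℝ))
      filter_upwards [ae_restrict_mem measurableSet_Icc, ae_restrict_of_ae hne]
        with x hx hx0
      exact hfb n x (hx.1.lt_of_ne (Ne.symm hx0)) (le_trans hx.2 hδhalf)
    have hcalc : (∫ x in (0:ℝ)..δ, K * x ^ (-β)) = K / (1 - β) * δ ^ (1 - β) := by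
      rw [intervalIntegral.integral_const_mul,
        integral_rpow (Or.inl (by linarith : (-1:ℝ) < -β)),
        Real.zero_rpow (by intro h; linarith : -β + 1 ≠ 0)]
      have h6 : -β + 1 = 1 - β := by ring
      rw [h6]
      ring
    linarith
  have key2 : ∀ n, (∫ x in δ..(1:ℝ), f n x) ≤ A n * Real.exp (-(A n * δ)) := by
    intro n
    have hδ1 : δ ≤ 1 := by linarith
    have hmono : (∫ x in δ..(1:ℝ), f n x) ≤
        ∫ _x in δ..(1:ℝ), A n * Real.exp (-(A n * δ)) := by
      apply intervalIntegral.integral_mono_on hδ1 ((hfint n).mono_set hsubδ1)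
        intervalIntegrable_const
      intro x hx
      have hx0 : 0 < x := lt_of_lt_of_le hδ0 hx.1
      have hI0 := hI_nonneg x hx0 hx.2
      have harg : A n * δ ≤ A n * x * (1 + I x) :=
        calc A n * δ ≤ A n * x := mul_le_mul_of_nonneg_left hx.1 (hA n).le
          _ = A n * x * 1 := (mul_one _).symm
          _ ≤ A n * x * (1 + I x) := mul_le_mul_of_nonneg_left (by linarith)
              (mul_nonneg (hA n).le hx0.le)
      exact mul_le_mul_of_nonneg_left (Real.exp_le_exp.2 (by linarith)) (hA n).le
    have hconst : (∫ _x in δ..(1:ℝ), A n * Real.exp (-(A n * δ)))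
        = (1 - δ) * (A n * Real.exp (-(A n * δ))) := by
      rw [intervalIntegral.integral_const, smul_eq_mul]
    have hnn : 0 ≤ A n * Real.exp (-(A n * δ)) :=
      mul_nonneg (hA n).le (Real.exp_pos _).le
    calc (∫ x in δ..(1:ℝ), f n x) ≤ (1 - δ) * (A n * Real.exp (-(A n * δ))) := by
          rw [← hconst]; exact hmono
      _ ≤ 1 * (A n * Real.exp (-(A n * δ))) :=
          mul_le_mul_of_nonneg_right (by linarith) hnn
      _ = A n * Real.exp (-(A n * δ)) := one_mul _
  have key0 : ∀ n, 0 ≤ ∫ x in (0:ℝ)..1, f n x := fun n =>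
    intervalIntegral.integral_nonneg zero_le_one
      (fun x _ => mul_nonneg (hA n).le (Real.exp_pos _).le)
  have hsplit : ∀ n, (∫ x in (0:ℝ)..1, f n x)
      = (∫ x in (0:ℝ)..δ, f n x) + ∫ x in δ..(1:ℝ), f n x :=
    fun n => (intervalIntegral.integral_add_adjacent_intervals
      ((hfint n).mono_set hsub01) ((hfint n).mono_set hsubδ1)).symm
  have h2 : Tendsto (fun n => A n * δ) atTop atTop := hAtop.atTop_mul_const hδ0
  have h3 : Tendsto (fun n : ℕ => δ⁻¹ * ((A n * δ) ^ 1 * Real.exp (-(A n * δ))))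
      atTop (nhds (δ⁻¹ * 0)) :=
    ((Real.tendsto_pow_mul_exp_neg_atTop_nhds_zero 1).const_mul δ⁻¹).comp h2
  rw [mul_zero] at h3
  have htail : Tendsto (fun n => A n * Real.exp (-(A n * δ))) atTop (nhds 0) := by
    refine h3.congr fun n => ?_
    rw [pow_one]
    field_simp
  rw [Metric.tendsto_atTop] at htail
  obtain ⟨N, hN⟩ := htail (ε / 2) (by linarith)
  refine ⟨N, fun n hn => ?_⟩
  have h5 := hN n hn
  rw [Real.dist_eq, sub_zero] at h5 ⊢
  have hAe : A n * Real.exp (-(A n * δ)) < ε / 2 := by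
    have := le_abs_self (A n * Real.exp (-(A n * δ)))
    linarith
  rw [abs_of_nonneg (key0 n)]
  calc (∫ x in (0:ℝ)..1, f n x)
      = (∫ x in (0:ℝ)..δ, f n x) + ∫ x in δ..(1:ℝ), f n x := hsplit n
    _ ≤ K / (1 - β) * δ ^ (1 - β) + A n * Real.exp (-(A n * δ)) :=
        add_le_add (key1 n) (key2 n)
    _ < ε / 2 + ε / 2 := add_lt_add hδsmall hAe
    _ = ε := by ring

theorem stmt_16 (T Rc α₀ : ℝ) (hT : 0 < T) (hRc : 0 < Rc) (hα₀ : 0 ≤ α₀) (hα₀2 : α₀ < 2)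
    (lam : ℕ → ℝ) (hpos : ∀ n, 0 < lam n) (hlim : Tendsto lam atTop atTop) :
    Tendsto
      (fun n => ∫ x in (0:ℝ)..1,
        lam n * π * Rc ^ 2 *
          Real.exp (-(lam n * π * Rc ^ 2 * x *
            (1 + ∫ t in (1:ℝ)..(1 / x), T / (T + t ^ (α₀ / 2))))))
      atTop (nhds 0) :=
  aux16 T Rc (α₀ / 2) hT hRc (by linarith) (by linarith) lam hpos hlim
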